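/- arXiv:2307.00336 — 2 statements merged into one kernel-verified Lean document; each statement's English description precedes it below -/
import Mathlib

section
/- Let v₁,…,v_N be an enumeration of the vertices {1,…,N} with no repeats, let S_i = {v₁,…,v_i}, and suppose rank(M_{S_k} U) = k. Then for every m' with k < m' ≤ N and every v ∈ S_{m'} ∖ S_k, τ(S_{m'}, v) ≤ 0; hence removing such a vertex does not improve S_{m'} at any SNR. -/
open Matrix

noncomputable section

open scoped Classical in
/-- The Moore–Penrose pseudoinverse of a real matrix, characterised by the four
Penrose conditions:  `A A† A = A`, `A† A A† = A†`, `(A A†)ᵀ = A A†`, `(A† A)ᵀ = A† A`. -/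
noncomputable def pinv {m n : Type*} [Fintype m] [Fintype n] [DecidableEq m] [DecidableEq n]
    (A : Matrix m n ℝ) : Matrix n m ℝ :=
  if h : ∃ B : Matrix n m ℝ,
      A * B * A = A ∧ B * A * B = B ∧ (A * B)ᵀ = A * B ∧ (B * A)ᵀ = B * A
  then h.choose else 0

/-- The sampling matrix `M_S` of a subset `S ⊆ {1,…,N}`: rows are indexed by the
elements of `S`, and the row corresponding to `j ∈ S` is the standard basis row vector `eⱼᵀ`. -/
def samp {N : ℕ} (S : Finset (Fin N)) : Matrix {x // x ∈ S} (Fin N) ℝ :=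
  fun i j => if (i : Fin N) = j then 1 else 0

/-- Squared Frobenius norm of a matrix. -/
def frobSq {m n : Type*} [Fintype m] [Fintype n] (A : Matrix m n ℝ) : ℝ :=
  ∑ i, ∑ j, (A i j) ^ 2

/-- The least-squares reconstruction matrix `R_S = U (M_S U)†`. -/
def lsRec {N k : ℕ} (U : Matrix (Fin N) (Fin k) ℝ) (S : Finset (Fin N)) :
    Matrix (Fin N) {x // x ∈ S} ℝ :=
  U * pinv (samp S * U)

/-- `ξ₁(S) = ‖U − R_S M_S U‖_F²`, the noiseless reconstruction error. -/
def xi1 {N k : ℕ} (U : Matrix (Fin N) (Fin k) ℝ) (S : Finset (Fin N)) : ℝ :=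
  frobSq (U - lsRec U S * (samp S * U))

/-- `ξ₂(S) = ‖R_S‖_F²`, the noise-sensitivity term. -/
def xi2 {N k : ℕ} (U : Matrix (Fin N) (Fin k) ℝ) (S : Finset (Fin N)) : ℝ :=
  frobSq (lsRec U S)

/-- `S_m = {v₁,…,v_m}`: the set consisting of the first `m` vertices of the
enumeration `v` (0-indexed: the vertices `v j` for `j < m`). -/
def firstSamples {N : ℕ} (v : Fin N → Fin N) (m : ℕ) : Finset (Fin N) :=
  (Finset.univ.filter fun j : Fin N => (j : ℕ) < m).image v

set_option linter.unusedSectionVars false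
set_option linter.unusedVariables false

section Aux
variable {m n : Type*} [Fintype m] [Fintype n] [DecidableEq m] [DecidableEq n]

lemma penrose_unique (A : Matrix m n ℝ) (B C : Matrix n m ℝ)
    (hB1 : A * B * A = A) (hB2 : B * A * B = B) (hB3 : (A * B)ᵀ = A * B) (hB4 : (B * A)ᵀ = B * A)
    (hC1 : A * C * A = A) (hC2 : C * A * C = C) (hC3 : (A * C)ᵀ = A * C) (hC4 : (C * A)ᵀ = C * A) :
    B = C := by
  have hAt : Aᵀ = Aᵀ * Cᵀ * Aᵀ := by
    conv_lhs => rw [← hC1]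
    simp [Matrix.transpose_mul, Matrix.mul_assoc]
  have hAtB : Aᵀ = Aᵀ * Bᵀ * Aᵀ := by
    conv_lhs => rw [← hB1]
    simp [Matrix.transpose_mul, Matrix.mul_assoc]
  have h1 : B = B * A * C := by
    calc B = B * A * B := hB2.symm
    _ = B * (A * B) := by rw [Matrix.mul_assoc]
    _ = B * (A * B)ᵀ := by rw [hB3]
    _ = B * (Bᵀ * Aᵀ) := by rw [Matrix.transpose_mul]
    _ = B * Bᵀ * Aᵀ := by rw [Matrix.mul_assoc]
    _ = B * Bᵀ * (Aᵀ * Cᵀ * Aᵀ) := by rw [← hAt]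
    _ = (B * Bᵀ * Aᵀ) * (Cᵀ * Aᵀ) := by simp [Matrix.mul_assoc]
    _ = (B * (Bᵀ * Aᵀ)) * (Cᵀ * Aᵀ) := by rw [Matrix.mul_assoc B]
    _ = (B * (A * B)ᵀ) * (A * C)ᵀ := by rw [Matrix.transpose_mul, Matrix.transpose_mul]
    _ = (B * (A * B)) * (A * C) := by rw [hB3, hC3]
    _ = (B * A * B) * (A * C) := by simp [Matrix.mul_assoc]
    _ = B * (A * C) := by rw [hB2]
    _ = B * A * C := (Matrix.mul_assoc B A C).symm
  have h2 : C = B * A * C := by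
    calc C = C * A * C := hC2.symm
    _ = (C * A)ᵀ * C := by rw [hC4]
    _ = Aᵀ * Cᵀ * C := by rw [Matrix.transpose_mul]
    _ = (Aᵀ * Bᵀ * Aᵀ) * Cᵀ * C := by rw [← hAtB]
    _ = (Aᵀ * Bᵀ) * (Aᵀ * Cᵀ) * C := by simp [Matrix.mul_assoc]
    _ = (B * A)ᵀ * (C * A)ᵀ * C := by rw [Matrix.transpose_mul, Matrix.transpose_mul]
    _ = (B * A) * ((C * A) * C) := by rw [hB4, hC4, Matrix.mul_assoc]
    _ = (B * A) * C := by rw [hC2]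
  rw [h1, ← h2]

lemma pinv_eq_of (A : Matrix m n ℝ) (B : Matrix n m ℝ)
    (h1 : A * B * A = A) (h2 : B * A * B = B) (h3 : (A * B)ᵀ = A * B) (h4 : (B * A)ᵀ = B * A) :
    pinv A = B := by
  have hex : ∃ B : Matrix n m ℝ,
      A * B * A = A ∧ B * A * B = B ∧ (A * B)ᵀ = A * B ∧ (B * A)ᵀ = B * A := ⟨B, h1, h2, h3, h4⟩
  rw [pinv, dif_pos hex]
  obtain ⟨g1, g2, g3, g4⟩ := hex.choose_spec
  exact penrose_unique A _ B g1 g2 g3 g4 h1 h2 h3 h4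

lemma gram_symm (A : Matrix m n ℝ) : (Aᵀ * A)ᵀ = Aᵀ * A := by
  simp [Matrix.transpose_mul]

lemma pinv_fullrank (A : Matrix m n ℝ) (hG : IsUnit (Aᵀ * A).det) :
    pinv A = (Aᵀ * A)⁻¹ * Aᵀ := by
  have hinv : (Aᵀ * A)⁻¹ * (Aᵀ * A) = 1 := Matrix.nonsing_inv_mul _ hG
  have hsym : ((Aᵀ * A)⁻¹)ᵀ = (Aᵀ * A)⁻¹ := by
    rw [Matrix.transpose_nonsing_inv, gram_symm]
  have hBA : ((Aᵀ * A)⁻¹ * Aᵀ) * A = 1 := by rw [Matrix.mul_assoc]; exact hinv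
  apply pinv_eq_of
  · calc A * ((Aᵀ * A)⁻¹ * Aᵀ) * A = A * (((Aᵀ * A)⁻¹ * Aᵀ) * A) := by rw [Matrix.mul_assoc]
      _ = A := by rw [hBA, Matrix.mul_one]
  · calc ((Aᵀ * A)⁻¹ * Aᵀ) * A * ((Aᵀ * A)⁻¹ * Aᵀ) = (1 : Matrix n n ℝ) * ((Aᵀ * A)⁻¹ * Aᵀ) := by rw [hBA]
      _ = (Aᵀ * A)⁻¹ * Aᵀ := by rw [Matrix.one_mul]
  · calc (A * ((Aᵀ * A)⁻¹ * Aᵀ))ᵀ = A * (((Aᵀ * A)⁻¹)ᵀ * Aᵀ) := by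
          simp [Matrix.transpose_mul, Matrix.mul_assoc]
      _ = A * ((Aᵀ * A)⁻¹ * Aᵀ) := by rw [hsym]
  · rw [hBA]; simp
end Aux

section Aux2
variable {m n p : Type*} [Fintype m] [Fintype n] [Fintype p]

lemma frobSq_eq_trace' (M : Matrix m n ℝ) :
    (∑ i, ∑ j, (M i j) ^ 2) = Matrix.trace (Mᵀ * M) := by
  rw [Matrix.trace, Finset.sum_comm]
  simp [Matrix.diag, Matrix.mul_apply, sq]

lemma mul_vecMulVec (M : Matrix m n ℝ) (a : n → ℝ) (b : p → ℝ) :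
    M * vecMulVec a b = vecMulVec (M *ᵥ a) b := by
  ext i j
  simp [Matrix.mul_apply, Matrix.vecMulVec_apply, Matrix.mulVec, dotProduct,
    Finset.sum_mul, mul_assoc]

lemma vecMulVec_mul' (a : m → ℝ) (b : n → ℝ) (M : Matrix n p ℝ) :
    vecMulVec a b * M = vecMulVec a (b ᵥ* M) := by
  ext i j
  simp [Matrix.mul_apply, Matrix.vecMulVec_apply, Matrix.vecMul, dotProduct,
    Finset.mul_sum, mul_assoc]

lemma vecMulVec_smul (c : ℝ) (a : m → ℝ) (b : n → ℝ) :
    vecMulVec (c • a) b = c • vecMulVec a b := by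
  ext i j
  simp [Matrix.vecMulVec_apply, mul_assoc]

lemma trace_vecMulVec (a : m → ℝ) (b : m → ℝ) :
    Matrix.trace (vecMulVec a b) = a ⬝ᵥ b := by
  simp [Matrix.trace, Matrix.diag, Matrix.vecMulVec_apply, dotProduct]

lemma isUnit_det_of_rank_eq {k : ℕ} (G : Matrix (Fin k) (Fin k) ℝ) (h : G.rank = k) :
    IsUnit G.det := by
  rw [isUnit_iff_ne_zero]
  intro hdet
  obtain ⟨x, hx, hGx⟩ := (Matrix.exists_mulVec_eq_zero_iff).mpr hdet
  have hsurj : Function.Surjective G.mulVecLin := by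
    rw [← LinearMap.range_eq_top]
    apply Submodule.eq_top_of_finrank_eq
    rw [show Module.finrank ℝ ↥(LinearMap.range G.mulVecLin) = G.rank from rfl, h,
      Module.finrank_fintype_fun_eq_card, Fintype.card_fin]
  have hinj := (LinearMap.injective_iff_surjective (f := G.mulVecLin)).mpr hsurj
  exact hx (hinj (show G.mulVecLin x = G.mulVecLin 0 by simp [Matrix.mulVecLin_apply, hGx]))

lemma gram_symm' (A : Matrix m n ℝ) : (Aᵀ * A)ᵀ = Aᵀ * A := by
  simp [Matrix.transpose_mul]

lemma key_trace {k : ℕ} [DecidableEq m] (A : Matrix m (Fin k) ℝ) (u : Fin k → ℝ)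
    (hd : IsUnit (Aᵀ * A).det) :
    Matrix.trace (Aᵀ * A + vecMulVec u u)⁻¹ ≤ Matrix.trace (Aᵀ * A)⁻¹ := by
  set G := Aᵀ * A with hGdef
  set B := G⁻¹ with hB
  have hGB : G * B = 1 := Matrix.mul_nonsing_inv _ hd
  have hBsym : Bᵀ = B := by rw [hB, Matrix.transpose_nonsing_inv, hGdef, gram_symm']
  set x := B *ᵥ u with hx
  have hGx : G *ᵥ x = u := by rw [hx, Matrix.mulVec_mulVec, hGB, Matrix.one_mulVec]
  set c := u ⬝ᵥ x with hc
  have hc0 : 0 ≤ c := by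
    have hceq : c = (A *ᵥ x) ⬝ᵥ (A *ᵥ x) := by
      rw [hc, ← hGx, hGdef, ← Matrix.mulVec_mulVec, Matrix.mulVec_transpose,
        ← Matrix.dotProduct_mulVec]
    rw [hceq, dotProduct]
    exact Finset.sum_nonneg fun i _ => mul_self_nonneg _
  have h1c : (0:ℝ) < 1 + c := by linarith
  set s : ℝ := (1 + c)⁻¹ with hs
  set H := B - s • vecMulVec x x with hH
  have hxx : x ⬝ᵥ x = ∑ i, x i * x i := rfl
  have hGH : (G + vecMulVec u u) * H = 1 := by
    have e1 : vecMulVec u u * B = vecMulVec u x := by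
      rw [vecMulVec_mul', ← hBsym, Matrix.vecMul_transpose]
    have e2 : G * (s • vecMulVec x x) = s • vecMulVec u x := by
      rw [Matrix.mul_smul, _root_.mul_vecMulVec, hGx]
    have e3 : vecMulVec u u * (s • vecMulVec x x) = (s * c) • vecMulVec u x := by
      rw [Matrix.mul_smul, _root_.mul_vecMulVec]
      have : (vecMulVec u u) *ᵥ x = c • u := by
        ext i
        simp [Matrix.mulVec, Matrix.vecMulVec_apply, dotProduct, hc,
          Finset.mul_sum, mul_assoc, mul_comm]
      rw [this, _root_.vecMulVec_smul, smul_smul, mul_comm s c, mul_comm c s]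
    rw [hH, Matrix.mul_sub, Matrix.add_mul, Matrix.add_mul, hGB, e1, e2, e3]
    have hcoef : s • vecMulVec u x + (s * c) • vecMulVec u x = vecMulVec u x := by
      rw [← add_smul]
      have : s + s * c = 1 := by rw [hs]; field_simp
      rw [this, one_smul]
    calc (1 : Matrix (Fin k) (Fin k) ℝ) + vecMulVec u x - (s • vecMulVec u x + (s * c) • vecMulVec u x)
        = 1 + vecMulVec u x - vecMulVec u x := by rw [hcoef]
      _ = 1 := by abel
  have hinv : (G + vecMulVec u u)⁻¹ = H := Matrix.inv_eq_right_inv hGH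
  rw [hinv, hH, Matrix.trace_sub, Matrix.trace_smul, _root_.trace_vecMulVec]
  have : 0 ≤ s • (x ⬝ᵥ x) := by
    apply smul_nonneg (le_of_lt (by positivity))
    rw [hxx]; exact Finset.sum_nonneg fun i _ => mul_self_nonneg _
  linarith [this]
end Aux2

section Aux3
variable {N k : ℕ}

lemma samp_mul_apply (S : Finset (Fin N)) (U : Matrix (Fin N) (Fin k) ℝ)
    (i : {x // x ∈ S}) (a : Fin k) : (samp S * U) i a = U (i : Fin N) a := by
  simp [Matrix.mul_apply, samp, ite_mul]

lemma gram_apply (S : Finset (Fin N)) (U : Matrix (Fin N) (Fin k) ℝ) (a b : Fin k) :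
    ((samp S * U)ᵀ * (samp S * U)) a b = ∑ j ∈ S, U j a * U j b := by
  rw [Matrix.mul_apply]
  simp only [Matrix.transpose_apply, samp_mul_apply]
  exact Finset.sum_coe_sort S (fun j => U j a * U j b)

lemma gram_erase (S : Finset (Fin N)) (w : Fin N) (hw : w ∈ S) (U : Matrix (Fin N) (Fin k) ℝ) :
    (samp S * U)ᵀ * (samp S * U)
      = (samp (S.erase w) * U)ᵀ * (samp (S.erase w) * U) + vecMulVec (U w) (U w) := by
  ext a b
  simp only [Matrix.add_apply, gram_apply, Matrix.vecMulVec_apply]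
  rw [← Finset.sum_erase_add S _ hw]

lemma rank_mono (U : Matrix (Fin N) (Fin k) ℝ) (S₀ S : Finset (Fin N)) (hsub : S₀ ⊆ S)
    (h : (samp S₀ * U).rank = k) : (samp S * U).rank = k := by
  classical
  set P : Matrix {x // x ∈ S₀} {x // x ∈ S} ℝ :=
    fun i j => if (i : Fin N) = (j : Fin N) then 1 else 0 with hP
  have hPS : P * (samp S * U) = samp S₀ * U := by
    ext i a
    rw [Matrix.mul_apply, samp_mul_apply]
    simp only [hP, samp_mul_apply, ite_mul, one_mul, zero_mul]
    rw [Finset.sum_eq_single (⟨(i : Fin N), hsub i.2⟩ : {x // x ∈ S})]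
    · simp
    · intro b _ hb
      rw [if_neg]
      intro hc
      exact hb (Subtype.ext hc.symm)
    · intro h; exact absurd (Finset.mem_univ _) h
  have h1 : (samp S * U).rank ≤ k := by
    simpa using Matrix.rank_le_card_width (samp S * U)
  have h2 : k ≤ (samp S * U).rank := by
    calc k = (samp S₀ * U).rank := h.symm
    _ = (P * (samp S * U)).rank := by rw [hPS]
    _ ≤ (samp S * U).rank := Matrix.rank_mul_le_right P (samp S * U)
  omega

lemma firstSamples_mono (v : Fin N → Fin N) {a b : ℕ} (h : a ≤ b) :
    firstSamples v a ⊆ firstSamples v b := by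
  intro x hx
  simp only [firstSamples, Finset.mem_image, Finset.mem_filter, Finset.mem_univ, true_and] at *
  obtain ⟨j, hj, rfl⟩ := hx
  exact ⟨j, lt_of_lt_of_le hj h, rfl⟩

lemma xi1_zero (U : Matrix (Fin N) (Fin k) ℝ) (S : Finset (Fin N))
    (hG : IsUnit ((samp S * U)ᵀ * (samp S * U)).det) : xi1 U S = 0 := by
  set A := samp S * U with hA
  have hBA : pinv A * A = 1 := by
    rw [pinv_fullrank A hG, Matrix.mul_assoc]
    exact Matrix.nonsing_inv_mul _ hG
  have : lsRec U S * (samp S * U) = U := by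
    rw [lsRec, ← hA, Matrix.mul_assoc, hBA, Matrix.mul_one]
  simp [xi1, this, frobSq]

lemma xi2_eq_trace (U : Matrix (Fin N) (Fin k) ℝ) (hU : Uᵀ * U = 1) (S : Finset (Fin N))
    (hG : IsUnit ((samp S * U)ᵀ * (samp S * U)).det) :
    xi2 U S = Matrix.trace ((samp S * U)ᵀ * (samp S * U))⁻¹ := by
  set A := samp S * U with hA
  set G := Aᵀ * A with hGdef
  have hsym : (G⁻¹)ᵀ = G⁻¹ := by rw [Matrix.transpose_nonsing_inv, hGdef, gram_symm']
  have hBG : G⁻¹ * G = 1 := Matrix.nonsing_inv_mul _ hG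
  rw [xi2, lsRec, ← hA, pinv_fullrank A hG, ← hGdef, frobSq, frobSq_eq_trace']
  have e : (U * (G⁻¹ * Aᵀ))ᵀ * (U * (G⁻¹ * Aᵀ)) = A * (G⁻¹ * (G⁻¹ * Aᵀ)) := by
    calc (U * (G⁻¹ * Aᵀ))ᵀ * (U * (G⁻¹ * Aᵀ))
        = A * ((G⁻¹)ᵀ * ((Uᵀ * U) * (G⁻¹ * Aᵀ))) := by
          simp [Matrix.transpose_mul, Matrix.mul_assoc]
      _ = A * (G⁻¹ * (G⁻¹ * Aᵀ)) := by rw [hsym, hU, Matrix.one_mul]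
  rw [e, Matrix.trace_mul_comm, Matrix.mul_assoc, Matrix.mul_assoc, ← hGdef,
    ← Matrix.mul_assoc G⁻¹ G⁻¹ G, Matrix.mul_assoc G⁻¹ G⁻¹ G]
  rw [hBG]
  rw [Matrix.mul_one]
end Aux3


/-- if `rank(M_{S_k} U) = k` then for every `m'` with `k < m' ≤ N` and
every `v ∈ S_{m'} ∖ S_k`, `τ(S_{m'}, v) ≤ 0`; hence removing such a vertex does not
improve `S_{m'}` at any `SNR > 0`. -/
theorem stmt4 (N k : ℕ) (hN : 0 < N) (hk : 0 < k) (hkN : k ≤ N)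
    (U : Matrix (Fin N) (Fin k) ℝ) (hU : Uᵀ * U = 1)
    (v : Fin N → Fin N) (hv : Function.Bijective v)
    (hrank : (samp (firstSamples v k) * U).rank = k) :
    ∀ m' : ℕ, k < m' → m' ≤ N → ∀ w ∈ firstSamples v m' \ firstSamples v k,
      ((k : ℝ) / N) *
        (xi2 U (firstSamples v m') - xi2 U ((firstSamples v m').erase w)) ≤ 0 ∧
      ∀ SNR : ℝ, 0 < SNR →
        xi1 U (firstSamples v m') + ((k : ℝ) / (N * SNR)) * xi2 U (firstSamples v m') ≤
          xi1 U ((firstSamples v m').erase w) +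
            ((k : ℝ) / (N * SNR)) * xi2 U ((firstSamples v m').erase w) := by
  intro m' hkm' hm'N w hw
  set S := firstSamples v m' with hS
  set S' := S.erase w with hS'
  obtain ⟨hwS, hwS0⟩ := Finset.mem_sdiff.mp hw
  have hsubS : firstSamples v k ⊆ S := firstSamples_mono v (le_of_lt hkm')
  have hsubS' : firstSamples v k ⊆ S' := Finset.subset_erase.mpr ⟨hsubS, hwS0⟩
  have hrS : (samp S * U).rank = k := rank_mono U _ S hsubS hrank
  have hrS' : (samp S' * U).rank = k := rank_mono U _ S' hsubS' hrank
  have hGS : IsUnit ((samp S * U)ᵀ * (samp S * U)).det :=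
    isUnit_det_of_rank_eq _ (by rw [Matrix.rank_transpose_mul_self, hrS])
  have hGS' : IsUnit ((samp S' * U)ᵀ * (samp S' * U)).det :=
    isUnit_det_of_rank_eq _ (by rw [Matrix.rank_transpose_mul_self, hrS'])
  have htr : Matrix.trace ((samp S * U)ᵀ * (samp S * U))⁻¹
      ≤ Matrix.trace ((samp S' * U)ᵀ * (samp S' * U))⁻¹ := by
    have h := key_trace (samp S' * U) (U w) hGS'
    rwa [← gram_erase S w hwS U] at h
  have hx2 : xi2 U S ≤ xi2 U S' := by
    rw [xi2_eq_trace U hU S hGS, xi2_eq_trace U hU S' hGS']; exact htr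
  have hx1S : xi1 U S = 0 := xi1_zero U S hGS
  have hx1S' : xi1 U S' = 0 := xi1_zero U S' hGS'
  constructor
  · have hc : (0:ℝ) ≤ (k:ℝ)/N := by positivity
    simpa using mul_le_mul_of_nonneg_left (sub_nonpos.mpr hx2) hc
  · intro SNR hSNR
    rw [hx1S, hx1S', zero_add, zero_add]
    have hc : (0:ℝ) ≤ (k:ℝ)/(N*SNR) := by positivity
    exact mul_le_mul_of_nonneg_left hx2 hc
end
end

section
/- For every subset S ⊆ {1,…,N} of size at least 2 and every v ∈ S, the quantity Δ₁(S,v) = ξ₁(S) − ξ₁(S∖{v}) belongs to {0, −1}; in particular Δ₁(S,v) ≤ 0. -/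
open Matrix

noncomputable section

lemma diag_ext {n : Type*} [DecidableEq n] {e f : n → ℝ} (h : ∀ i, e i = f i) :
    diagonal e = diagonal f := by
  exact congrArg diagonal (funext h)

lemma sym_pinv_exists {n : Type*} [Fintype n] [DecidableEq n] (G : Matrix n n ℝ) (hG : Gᵀ = G) :
    ∃ B : Matrix n n ℝ, G * B * G = G ∧ B * G * B = B ∧ Bᵀ = B ∧ G * B = B * G := by
  have hH : G.IsHermitian := by
    rwa [Matrix.IsHermitian, conjTranspose_eq_transpose_of_trivial]
  set Q : Matrix n n ℝ := (hH.eigenvectorUnitary : Matrix n n ℝ) with hQdef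
  have hstar : ∀ M : Matrix n n ℝ, star M = Mᵀ := fun M => by
    rw [star_eq_conjTranspose, conjTranspose_eq_transpose_of_trivial]
  have h1 : Qᵀ * Q = 1 := by
    rw [← hstar]; exact Unitary.coe_star_mul_self hH.eigenvectorUnitary
  have hd : (RCLike.ofReal ∘ hH.eigenvalues : n → ℝ) = hH.eigenvalues := by
    ext i; simp
  have hspec : G = Q * diagonal hH.eigenvalues * Qᵀ := by
    have := hH.spectral_theorem
    rwa [hd, Unitary.conjStarAlgAut_apply, hstar] at this
  set d := hH.eigenvalues
  have key : ∀ D1 D2 : Matrix n n ℝ,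
      (Q * D1 * Qᵀ) * (Q * D2 * Qᵀ) = Q * (D1 * D2) * Qᵀ := by
    intro D1 D2
    calc (Q * D1 * Qᵀ) * (Q * D2 * Qᵀ) = Q * (D1 * ((Qᵀ * Q) * D2)) * Qᵀ := by
          simp only [mul_assoc]
      _ = Q * (D1 * D2) * Qᵀ := by rw [h1, one_mul]
  have hdd : ∀ e f : n → ℝ, (diagonal e) * (diagonal f) = diagonal (fun i => e i * f i) :=
    fun e f => diagonal_mul_diagonal e f
  refine ⟨Q * diagonal (fun i => (d i)⁻¹) * Qᵀ, ?_, ?_, ?_, ?_⟩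
  · rw [hspec, key, key, hdd, hdd]
    congr 2
    refine diag_ext fun i => ?_
    rcases eq_or_ne (d i) 0 with h | h
    · simp [h]
    · field_simp
  · rw [hspec, key, key, hdd, hdd]
    congr 2
    refine diag_ext fun i => ?_
    rcases eq_or_ne (d i) 0 with h | h
    · simp [h]
    · field_simp
  · simp only [transpose_mul, transpose_transpose, diagonal_transpose, mul_assoc]
  · rw [hspec, key, key, hdd, hdd]
    congr 2
    exact diag_ext fun i => mul_comm _ _

lemma pinv_exists_gen {m n : Type*} [Fintype m] [Fintype n] [DecidableEq m] [DecidableEq n]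
    (A : Matrix m n ℝ) : ∃ B : Matrix n m ℝ,
    A * B * A = A ∧ B * A * B = B ∧ (A * B)ᵀ = A * B ∧ (B * A)ᵀ = B * A := by
  obtain ⟨C, h1, h2, h3, h4⟩ := sym_pinv_exists (Aᵀ * A)
    (by rw [transpose_mul, transpose_transpose])
  have hGP : (Aᵀ * A) * (C * (Aᵀ * A)) = Aᵀ * A := by rw [← Matrix.mul_assoc, h1]
  have hAP : A * (C * (Aᵀ * A)) = A := by
    have e1 : Aᵀ * (A * (C * (Aᵀ * A))) = Aᵀ * A := by rw [← Matrix.mul_assoc, hGP]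
    have hzero : (A - A * (C * (Aᵀ * A)))ᵀ * (A - A * (C * (Aᵀ * A))) = 0 := by
      rw [transpose_sub, Matrix.sub_mul, Matrix.mul_sub, Matrix.mul_sub, transpose_mul, e1,
        Matrix.mul_assoc, Matrix.mul_assoc, e1]
      abel
    have hzero' : (A - A * (C * (Aᵀ * A)))ᴴ * (A - A * (C * (Aᵀ * A))) = 0 := by
      rwa [conjTranspose_eq_transpose_of_trivial]
    exact (sub_eq_zero.mp (Matrix.conjTranspose_mul_self_eq_zero.mp hzero')).symm
  refine ⟨C * Aᵀ, ?_, ?_, ?_, ?_⟩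
  · have e : A * (C * Aᵀ) * A = A * (C * (Aᵀ * A)) := by simp only [Matrix.mul_assoc]
    rw [e, hAP]
  · calc C * Aᵀ * A * (C * Aᵀ) = (C * (Aᵀ * A) * C) * Aᵀ := by simp only [Matrix.mul_assoc]
      _ = C * Aᵀ := by rw [h2]
  · calc (A * (C * Aᵀ))ᵀ = A * Cᵀ * Aᵀ := by
          simp only [transpose_mul, transpose_transpose, Matrix.mul_assoc]
      _ = A * (C * Aᵀ) := by rw [h3, Matrix.mul_assoc]
  · have e : C * Aᵀ * A = C * (Aᵀ * A) := by rw [Matrix.mul_assoc]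
    rw [e, transpose_mul, h3, transpose_mul, transpose_transpose, h4]

lemma pinv_spec {m n : Type*} [Fintype m] [Fintype n] [DecidableEq m] [DecidableEq n]
    (A : Matrix m n ℝ) :
    A * pinv A * A = A ∧ pinv A * A * pinv A = pinv A ∧ (A * pinv A)ᵀ = A * pinv A ∧
      (pinv A * A)ᵀ = pinv A * A := by
  have h := pinv_exists_gen A
  rw [pinv, dif_pos h]
  exact h.choose_spec

lemma frob_trace {m n : Type*} [Fintype m] [Fintype n] (M : Matrix m n ℝ) :
    (Mᵀ * M).trace = ∑ i, ∑ j, (M i j) ^ 2 := by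
  rw [Matrix.trace]
  simp only [Matrix.diag_apply, Matrix.mul_apply, Matrix.transpose_apply]
  rw [Finset.sum_comm]
  simp [sq]

lemma trace_proj {n : Type*} [Fintype n] [DecidableEq n] (P : Matrix n n ℝ)
    (hs : Pᵀ = P) (hi : P * P = P) : P.trace = (P.rank : ℝ) := by
  have hH : P.IsHermitian := by
    rwa [Matrix.IsHermitian, Matrix.conjTranspose_eq_transpose_of_trivial]
  set Q : Matrix n n ℝ := (hH.eigenvectorUnitary : Matrix n n ℝ) with hQdef
  have hstar : ∀ M : Matrix n n ℝ, star M = Mᵀ := fun M => by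
    rw [Matrix.star_eq_conjTranspose, Matrix.conjTranspose_eq_transpose_of_trivial]
  have h1 : Qᵀ * Q = 1 := by
    rw [← hstar]; exact Unitary.coe_star_mul_self hH.eigenvectorUnitary
  have hd : (RCLike.ofReal ∘ hH.eigenvalues : n → ℝ) = hH.eigenvalues := by
    ext i; simp
  set d := hH.eigenvalues with hddef
  have hspec : P = Q * Matrix.diagonal d * Qᵀ := by
    have := hH.spectral_theorem
    rwa [hd, Unitary.conjStarAlgAut_apply, hstar] at this
  have key : ∀ D1 D2 : Matrix n n ℝ,
      (Q * D1 * Qᵀ) * (Q * D2 * Qᵀ) = Q * (D1 * D2) * Qᵀ := by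
    intro D1 D2
    calc (Q * D1 * Qᵀ) * (Q * D2 * Qᵀ) = Q * (D1 * ((Qᵀ * Q) * D2)) * Qᵀ := by
          simp only [Matrix.mul_assoc]
      _ = Q * (D1 * D2) * Qᵀ := by rw [h1, Matrix.one_mul]
  have cancel : ∀ X Y : Matrix n n ℝ, Q * X * Qᵀ = Q * Y * Qᵀ → X = Y := by
    intro X Y h
    have h' := congrArg (fun M => Qᵀ * M * Q) h
    simp only [Matrix.mul_assoc] at h'
    rw [h1] at h'
    simpa only [← Matrix.mul_assoc, h1, Matrix.one_mul, Matrix.mul_one] using h'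
  have hDD : Matrix.diagonal d * Matrix.diagonal d = Matrix.diagonal d := by
    apply cancel
    rw [← key, ← hspec, hi]
  have hval : ∀ i, d i * d i = d i := by
    intro i
    have := congrArg (fun M => M i i) hDD
    simpa [Matrix.diagonal_mul_diagonal, Matrix.diagonal_apply_eq] using this
  have htr : P.trace = ∑ i, d i := by
    rw [hspec, Matrix.trace_mul_comm, ← Matrix.mul_assoc, h1, Matrix.one_mul,
      Matrix.trace_diagonal]
  have hrank : P.rank = Fintype.card {i // d i ≠ 0} := hH.rank_eq_card_non_zero_eigs
  rw [htr, hrank, Fintype.card_subtype]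
  rw [← Finset.sum_filter_add_sum_filter_not Finset.univ (fun i => d i ≠ 0) d]
  have hz : ∑ i ∈ Finset.univ.filter (fun i => ¬ d i ≠ 0), d i = 0 := by
    apply Finset.sum_eq_zero
    intro i hi
    simpa using (Finset.mem_filter.mp hi).2
  have ho : ∑ i ∈ Finset.univ.filter (fun i => d i ≠ 0), d i
      = (Finset.univ.filter (fun i => d i ≠ 0)).card := by
    rw [Finset.card_eq_sum_ones, Nat.cast_sum]
    apply Finset.sum_congr rfl
    intro i hi
    have hne : d i ≠ 0 := (Finset.mem_filter.mp hi).2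
    have := hval i
    have : d i = 1 := by
      field_simp at this
      tauto
    simp [this]
  rw [hz, ho, add_zero]

lemma xi1_eq {N k : ℕ} (U : Matrix (Fin N) (Fin k) ℝ) (hU : Uᵀ * U = 1)
    (S : Finset (Fin N)) : xi1 U S = (k : ℝ) - ((samp S * U).rank : ℝ) := by
  obtain ⟨p1, p2, p3, p4⟩ := pinv_spec (samp S * U)
  set A := samp S * U with hA
  set B := pinv A with hB
  have hPP : (B * A) * (B * A) = B * A := by
    calc (B * A) * (B * A) = (B * A * B) * A := by simp only [Matrix.mul_assoc]
      _ = B * A := by rw [p2]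
  have hform : U - lsRec U S * A = U * (1 - B * A) := by
    rw [Matrix.mul_sub, Matrix.mul_one, lsRec, Matrix.mul_assoc]
  have hGram : (U * (1 - B * A))ᵀ * (U * (1 - B * A)) = 1 - B * A := by
    calc (U * (1 - B * A))ᵀ * (U * (1 - B * A))
        = (1 - B * A)ᵀ * ((Uᵀ * U) * (1 - B * A)) := by
          rw [Matrix.transpose_mul]; simp only [Matrix.mul_assoc]
      _ = (1 - B * A)ᵀ * (1 - B * A) := by rw [hU, Matrix.one_mul]
      _ = (1 - B * A) * (1 - B * A) := by
          rw [Matrix.transpose_sub, Matrix.transpose_one, p4]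
      _ = 1 - B * A := by
          simp only [Matrix.mul_sub, Matrix.sub_mul, Matrix.one_mul, Matrix.mul_one, hPP]
          abel
  have hfrob : xi1 U S = ((U * (1 - B * A))ᵀ * (U * (1 - B * A))).trace := by
    rw [xi1, hform, frob_trace, frobSq]
  rw [hfrob, hGram, Matrix.trace_sub, Matrix.trace_one]
  have hrank : ((B * A).rank : ℝ) = (A.rank : ℝ) := by
    congr 1
    apply le_antisymm (Matrix.rank_mul_le_right B A)
    have hAP : A * (B * A) = A := by rw [← Matrix.mul_assoc, p1]
    calc A.rank = (A * (B * A)).rank := by rw [hAP]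
      _ ≤ (B * A).rank := Matrix.rank_mul_le_right A (B * A)
  have htr : (B * A).trace = ((B * A).rank : ℝ) := trace_proj (B * A) p4 hPP
  rw [htr, hrank]
  simp

lemma samp_row {N k : ℕ} (U : Matrix (Fin N) (Fin k) ℝ) (T : Finset (Fin N))
    (i : {x // x ∈ T}) : (samp T * U) i = U (i : Fin N) := by
  funext c
  rw [Matrix.mul_apply]
  simp [samp, Finset.sum_ite_eq]

lemma rank_erase_le {N k : ℕ} (U : Matrix (Fin N) (Fin k) ℝ) (S : Finset (Fin N)) (v : Fin N) :
    (samp (S.erase v) * U).rank ≤ (samp S * U).rank := by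
  set E : Matrix {x // x ∈ S.erase v} {x // x ∈ S} ℝ :=
    fun i j => if (i : Fin N) = (j : Fin N) then 1 else 0 with hE
  have hfac : samp (S.erase v) = E * samp S := by
    funext i c
    rw [Matrix.mul_apply]
    have hiS : (i : Fin N) ∈ S := Finset.mem_of_mem_erase i.2
    rw [Fintype.sum_eq_single (⟨(i : Fin N), hiS⟩ : {x // x ∈ S})]
    · simp [samp, hE]
    · intro l hl
      have : (i : Fin N) ≠ (l : Fin N) := fun h => hl (Subtype.ext h.symm)
      simp [hE, this]
  rw [hfac, Matrix.mul_assoc]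
  exact Matrix.rank_mul_le_right E (samp S * U)

lemma rank_le_erase_add_one {N k : ℕ} (U : Matrix (Fin N) (Fin k) ℝ) (S : Finset (Fin N))
    (v : Fin N) : (samp S * U).rank ≤ (samp (S.erase v) * U).rank + 1 := by
  have hrange : ∀ T : Finset (Fin N), Set.range (samp T * U) = U '' (T : Set (Fin N)) := by
    intro T
    have : (samp T * U) = fun i : {x // x ∈ T} => U (i : Fin N) := by
      funext i; exact samp_row U T i
    rw [this]
    show Set.range (U ∘ (Subtype.val : {x // x ∈ T} → Fin N)) = _
    ext x; simp only [Set.mem_range, Subtype.exists]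
    exact ⟨fun ⟨a, b, h⟩ => ⟨a, b, h⟩, fun ⟨a, b, h⟩ => ⟨a, b, h⟩⟩
  rw [Matrix.rank_eq_finrank_span_row, Matrix.rank_eq_finrank_span_row, Matrix.row, Matrix.row, hrange, hrange]
  have hsub : U '' (S : Set (Fin N)) ⊆ insert (U v) (U '' ((S.erase v) : Set (Fin N))) := by
    intro x hx
    obtain ⟨j, hj, rfl⟩ := hx
    rcases eq_or_ne j v with rfl | hne
    · exact Set.mem_insert _ _
    · exact Set.mem_insert_of_mem _
        ⟨j, Finset.mem_coe.mpr (Finset.mem_erase.mpr ⟨hne, Finset.mem_coe.mp hj⟩), rfl⟩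
  calc Module.finrank ℝ (Submodule.span ℝ (U '' (S : Set (Fin N))))
      ≤ Module.finrank ℝ (Submodule.span ℝ (insert (U v) (U '' ((S.erase v) : Set (Fin N))))) :=
        Submodule.finrank_mono (Submodule.span_mono hsub)
    _ ≤ Module.finrank ℝ (Submodule.span ℝ (U '' ((S.erase v) : Set (Fin N)))) + 1 := by
        rw [Submodule.span_insert]
        refine le_trans (Submodule.finrank_add_le_finrank_add_finrank _ _) ?_
        have h1 : Module.finrank ℝ (ℝ ∙ (U v)) ≤ 1 := by
          rcases eq_or_ne (U v) 0 with h | h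
          · rw [h, Submodule.span_zero_singleton]
            simp
          · rw [finrank_span_singleton h]
        omega

/-- for `|S| ≥ 2` and `v ∈ S`, `Δ₁(S,v) = ξ₁(S) − ξ₁(S∖{v})` belongs to
`{0, −1}`; in particular `Δ₁(S,v) ≤ 0`. -/
theorem stmt6 (N k : ℕ) (hN : 0 < N) (hk : 0 < k) (hkN : k ≤ N)
    (U : Matrix (Fin N) (Fin k) ℝ) (hU : Uᵀ * U = 1)
    (S : Finset (Fin N)) (hS : 2 ≤ S.card) (v : Fin N) (hv : v ∈ S) :
    (xi1 U S - xi1 U (S.erase v) = 0 ∨ xi1 U S - xi1 U (S.erase v) = -1) ∧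
      xi1 U S - xi1 U (S.erase v) ≤ 0 := by
  have h1 := xi1_eq U hU S
  have h2 := xi1_eq U hU (S.erase v)
  have hle := rank_erase_le U S v
  have hge := rank_le_erase_add_one U S v
  set r := (samp S * U).rank
  set r' := (samp (S.erase v) * U).rank
  have hdiff : xi1 U S - xi1 U (S.erase v) = (r' : ℝ) - (r : ℝ) := by
    rw [h1, h2]; ring
  rcases (by omega : r = r' ∨ r = r' + 1) with h | h
  · constructor
    · left; rw [hdiff, h]; ring
    · rw [hdiff, h]; simp
  · constructor
    · right; rw [hdiff, h]; push_cast; ring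
    · rw [hdiff, h]; push_cast; linarith
end
end
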